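/- Define D_τ^(k) = {x ∈ Ω : τ(x) ≥ E^(k)(τ)}. Then Ω ⊇ D_τ^(k) ⊇ D_τ^(k+Δk) ⊇ X* for all k ∈ ℝ and Δk > 0. -/

import Mathlib

open MeasureTheory Real

/-- With D_τ^(k) = {x ∈ Ω : τ(x) ≥ E^(k)(τ)}, for all k and
Δk > 0: Ω ⊇ D_τ^(k) ⊇ D_τ^(k+Δk) ⊇ X*. -/
theorem stmt15 {n : ℕ} (Ω : Set (EuclideanSpace ℝ (Fin n)))
    (hΩc : IsCompact Ω) (hΩpos : 0 < volume Ω)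
    (f : EuclideanSpace ℝ (Fin n) → ℝ) (hf : ContinuousOn f Ω)
    (ρ : ℝ → ℝ) (hρ : StrictAnti ρ) (hρpos : ∀ x ∈ Ω, 0 < ρ (f x))
    (τ : EuclideanSpace ℝ (Fin n) → ℝ) (hτ : ∀ x, τ x = ρ (f x))
    (m : ℝ → EuclideanSpace ℝ (Fin n) → ℝ)
    (hm : ∀ k x, m k x = τ x ^ k / ∫ t in Ω, τ t ^ k)
    (E : ℝ → ℝ) (hE : ∀ k, E k = ∫ x in Ω, τ x * m k x)
    (Xstar : Set (EuclideanSpace ℝ (Fin n)))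
    (hX : Xstar = {x ∈ Ω | ∀ y ∈ Ω, f x ≤ f y})
    (D : ℝ → Set (EuclideanSpace ℝ (Fin n)))
    (hD : ∀ k, D k = {x ∈ Ω | E k ≤ τ x}) :
    ∀ k : ℝ, ∀ Δk : ℝ, 0 < Δk →
      D k ⊆ Ω ∧ D (k + Δk) ⊆ D k ∧ Xstar ⊆ D (k + Δk) := by
  intro k Δk hΔ
  have hΩm : MeasurableSet Ω := hΩc.measurableSet
  haveI hfin : IsFiniteMeasure (volume.restrict Ω) :=
    ⟨by rw [Measure.restrict_apply_univ]; exact hΩc.measure_lt_top⟩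
  have hne : Ω.Nonempty := by
    rcases Set.eq_empty_or_nonempty Ω with h | h
    · rw [h] at hΩpos; simp at hΩpos
    · exact h
  obtain ⟨z, hzΩ, hz⟩ := hΩc.exists_isMinOn hne hf
  obtain ⟨w, hwΩ, hw⟩ := hΩc.exists_isMaxOn hne hf
  set a := τ z with ha
  set b := τ w with hb
  have hbpos : 0 < b := by rw [hb, hτ]; exact hρpos w hwΩ
  have hτb : ∀ x ∈ Ω, b ≤ τ x := fun x hx => by
    rw [hb, hτ, hτ]; exact hρ.antitone (hw hx)
  have hτa : ∀ x ∈ Ω, τ x ≤ a := fun x hx => by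
    rw [ha, hτ, hτ]; exact hρ.antitone (hz hx)
  have hτpos : ∀ x ∈ Ω, 0 < τ x := fun x hx => lt_of_lt_of_le hbpos (hτb x hx)
  have hapos : 0 < a := lt_of_lt_of_le hbpos (hτb z hzΩ)
  -- measurability
  have hτm : AEMeasurable τ (volume.restrict Ω) := by
    have h1 : AEMeasurable f (volume.restrict Ω) := hf.aemeasurable hΩm
    have hρm : Measurable ρ := hρ.antitone.measurable
    exact (hρm.comp_aemeasurable h1).congr
      (Filter.Eventually.of_forall fun x => (hτ x).symm)
  have hτsm : ∀ s : ℝ, AEStronglyMeasurable (fun x => τ x ^ s) (volume.restrict Ω) := by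
    intro s
    have h1 : AEMeasurable (fun x => Real.exp (Real.log (τ x) * s)) (volume.restrict Ω) :=
      Real.measurable_exp.comp_aemeasurable
        ((Real.measurable_log.comp_aemeasurable hτm).mul_const s)
    have h2 : (fun x => Real.exp (Real.log (τ x) * s)) =ᵐ[volume.restrict Ω]
        fun x => τ x ^ s :=
      (ae_restrict_mem hΩm).mono fun x hx => (Real.rpow_def_of_pos (hτpos x hx) s).symm
    exact (h1.congr h2).aestronglyMeasurable
  -- pointwise bounds on τ ^ s over Ω
  have hub : ∀ s : ℝ, ∀ x ∈ Ω, τ x ^ s ≤ max (a ^ s) (b ^ s) := by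
    intro s x hx
    rcases le_or_gt 0 s with hs | hs
    · exact le_max_of_le_left (rpow_le_rpow (hτpos x hx).le (hτa x hx) hs)
    · exact le_max_of_le_right (rpow_le_rpow_of_nonpos hbpos (hτb x hx) hs.le)
  have hlb : ∀ s : ℝ, ∀ x ∈ Ω, min (a ^ s) (b ^ s) ≤ τ x ^ s := by
    intro s x hx
    rcases le_or_gt 0 s with hs | hs
    · exact le_trans (min_le_right _ _) (rpow_le_rpow hbpos.le (hτb x hx) hs)
    · exact le_trans (min_le_left _ _)
        (rpow_le_rpow_of_nonpos (hτpos x hx) (hτa x hx) hs.le)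
  -- Memℒp and integrability
  have hmem : ∀ (s : ℝ) (p : ENNReal), MemLp (fun x => τ x ^ s) p (volume.restrict Ω) := by
    intro s p
    refine MemLp.of_bound (hτsm s) (max (a ^ s) (b ^ s)) ?_
    rw [ae_restrict_iff' hΩm]
    refine Filter.Eventually.of_forall fun x hx => ?_
    rw [Real.norm_of_nonneg (rpow_nonneg (hτpos x hx).le s)]
    exact hub s x hx
  have hint : ∀ s : ℝ, IntegrableOn (fun x => τ x ^ s) Ω volume := fun s =>
    memLp_one_iff_integrable.mp (hmem s 1)
  set g : ℝ → ℝ := fun s => ∫ x in Ω, τ x ^ s with hg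
  have hgnn : ∀ s, 0 ≤ g s := fun s =>
    setIntegral_nonneg hΩm fun x hx => rpow_nonneg (hτpos x hx).le s
  have hvol : 0 < (volume Ω).toReal :=
    ENNReal.toReal_pos hΩpos.ne' hΩc.measure_lt_top.ne
  have hgpos : ∀ s, 0 < g s := by
    intro s
    have hc : 0 < min (a ^ s) (b ^ s) :=
      lt_min (rpow_pos_of_pos hapos s) (rpow_pos_of_pos hbpos s)
    have h1 : (∫ _ in Ω, min (a ^ s) (b ^ s)) ≤ g s :=
      setIntegral_mono_on (integrableOn_const hΩc.measure_lt_top.ne)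
        (hint s) hΩm (hlb s)
    rw [setIntegral_const, smul_eq_mul] at h1
    exact lt_of_lt_of_le (mul_pos hvol hc) h1
  -- E in terms of g
  have hEg : ∀ s : ℝ, E s = g (s + 1) / g s := by
    intro s
    rw [hE]
    have hcongr : ∀ x ∈ Ω, τ x * m s x = τ x ^ (s + 1) / g s := by
      intro x hx
      rw [hm, rpow_add (hτpos x hx), rpow_one]
      ring
    rw [setIntegral_congr_fun hΩm hcongr, integral_div]
  -- Hölder consequence
  have hnn : ∀ s : ℝ, 0 ≤ᵐ[volume.restrict Ω] fun x => τ x ^ s := by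
    intro s
    rw [Filter.EventuallyLE, ae_restrict_iff' hΩm]
    exact Filter.Eventually.of_forall fun x hx => rpow_nonneg (hτpos x hx).le s
  have holder : ∀ p q e₁ e₂ : ℝ, p.HolderConjugate q →
      (∫ x in Ω, τ x ^ (e₁ / p + e₂ / q)) ≤ g e₁ ^ (1 / p) * g e₂ ^ (1 / q) := by
    intro p q e₁ e₂ hpq
    have h1 : (∫ x in Ω, τ x ^ (e₁ / p + e₂ / q)) =
        ∫ x in Ω, τ x ^ (e₁ / p) * τ x ^ (e₂ / q) :=
      setIntegral_congr_fun hΩm fun x hx => rpow_add (hτpos x hx) _ _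
    have h2 : (∫ x in Ω, (τ x ^ (e₁ / p)) ^ p) = g e₁ :=
      setIntegral_congr_fun hΩm fun x hx => by
        rw [← rpow_mul (hτpos x hx).le, div_mul_cancel₀ _ hpq.pos.ne']
    have h3 : (∫ x in Ω, (τ x ^ (e₂ / q)) ^ q) = g e₂ :=
      setIntegral_congr_fun hΩm fun x hx => by
        rw [← rpow_mul (hτpos x hx).le, div_mul_cancel₀ _ hpq.symm.pos.ne']
    calc (∫ x in Ω, τ x ^ (e₁ / p + e₂ / q))
        = ∫ x in Ω, τ x ^ (e₁ / p) * τ x ^ (e₂ / q) := h1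
      _ ≤ (∫ x in Ω, (τ x ^ (e₁ / p)) ^ p) ^ (1 / p) *
            (∫ x in Ω, (τ x ^ (e₂ / q)) ^ q) ^ (1 / q) :=
          integral_mul_le_Lp_mul_Lq_of_nonneg hpq (hnn _) (hnn _) (hmem _ _) (hmem _ _)
      _ = g e₁ ^ (1 / p) * g e₂ ^ (1 / q) := by rw [h2, h3]
  -- key log-convexity consequence
  have key : g (k + 1) * g (k + Δk) ≤ g k * g (k + Δk + 1) := by
    set p : ℝ := (Δk + 1) / Δk with hp
    set q : ℝ := Δk + 1 with hq
    have hpq : p.HolderConjugate q := by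
      rw [Real.holderConjugate_iff]; constructor
      · rw [hp, lt_div_iff₀ hΔ]; linarith
      · rw [hp, hq]; field_simp
    have he1 : k / p + (k + Δk + 1) / q = k + 1 := by
      rw [hp, hq]; field_simp; ring
    have he2 : k / q + (k + Δk + 1) / p = k + Δk := by
      rw [hp, hq]; field_simp; ring
    have h1 : g (k + 1) ≤ g k ^ (1 / p) * g (k + Δk + 1) ^ (1 / q) := by
      have := holder p q k (k + Δk + 1) hpq
      rwa [he1] at this
    have h2 : g (k + Δk) ≤ g k ^ (1 / q) * g (k + Δk + 1) ^ (1 / p) := by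
      have := holder q p k (k + Δk + 1) hpq.symm
      rwa [he2] at this
    calc g (k + 1) * g (k + Δk)
        ≤ (g k ^ (1 / p) * g (k + Δk + 1) ^ (1 / q)) *
            (g k ^ (1 / q) * g (k + Δk + 1) ^ (1 / p)) :=
          mul_le_mul h1 h2 (hgnn _)
            (mul_nonneg (rpow_nonneg (hgnn _) _) (rpow_nonneg (hgnn _) _))
      _ = (g k ^ (1 / p) * g k ^ (1 / q)) *
            (g (k + Δk + 1) ^ (1 / q) * g (k + Δk + 1) ^ (1 / p)) := by ring
      _ = g k * g (k + Δk + 1) := by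
          rw [← rpow_add (hgpos k), ← rpow_add (hgpos (k + Δk + 1)), one_div, one_div,
            hpq.inv_add_inv_eq_one, add_comm q⁻¹, hpq.inv_add_inv_eq_one,
            rpow_one, rpow_one]
  have hEmono : E k ≤ E (k + Δk) := by
    rw [hEg, hEg, div_le_div_iff₀ (hgpos k) (hgpos (k + Δk))]
    calc g (k + 1) * g (k + Δk) ≤ g k * g (k + Δk + 1) := key
      _ = g (k + Δk + 1) * g k := by ring
  -- E ≤ τ at minimizers
  have hEle : ∀ x ∈ Xstar, E (k + Δk) ≤ τ x := by
    intro x hx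
    rw [hX] at hx
    obtain ⟨hxΩ, hxmin⟩ := hx
    have hτmax : ∀ y ∈ Ω, τ y ≤ τ x := fun y hy => by
      rw [hτ, hτ]; exact hρ.antitone (hxmin y hy)
    have hmono : g (k + Δk + 1) ≤ τ x * g (k + Δk) := by
      have h1 : (∫ t in Ω, τ t ^ (k + Δk + 1)) ≤ ∫ t in Ω, τ x * τ t ^ (k + Δk) := by
        refine setIntegral_mono_on (hint _) ((hint (k + Δk)).const_mul _) hΩm ?_
        intro t ht
        rw [rpow_add (hτpos t ht), rpow_one]
        calc τ t ^ (k + Δk) * τ t ≤ τ t ^ (k + Δk) * τ x :=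
              mul_le_mul_of_nonneg_left (hτmax t ht) (rpow_nonneg (hτpos t ht).le _)
          _ = τ x * τ t ^ (k + Δk) := mul_comm _ _
      rwa [integral_const_mul] at h1
    rw [hEg, div_le_iff₀ (hgpos (k + Δk))]
    exact hmono
  refine ⟨?_, ?_, ?_⟩
  · intro x hx
    rw [hD] at hx
    exact hx.1
  · intro x hx
    rw [hD] at hx ⊢
    exact ⟨hx.1, le_trans hEmono hx.2⟩
  · intro x hx
    rw [hD]
    have hxΩ : x ∈ Ω := by rw [hX] at hx; exact hx.1
    exact ⟨hxΩ, hEle x hx⟩
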